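/- For n ≥ 2 and fixed a_1, ..., a_{n-2}, the discriminant Δ(a_{n-1}, a_n) of X^n + a_1 X^{n-1} + ... + a_{n-1} X + a_n, as a polynomial in the two variables a_{n-1} and a_n, equals (-1)^{(n-1)(n-2)/2} (n-1)^{n-1} a_{n-1}^n plus a polynomial of total degree strictly less than n in (a_{n-1}, a_n). -/

import Mathlib

open Polynomial

noncomputable section
namespace DiscProofAux

variable {S : Type*} [CommRing S]

/-- The matrix of multiplication by `g` on `S[X]/(q)` in the power basis. -/
def mulMat (n : ℕ) (q g : S[X]) : Matrix (Fin n) (Fin n) S :=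
  Matrix.of fun i j => ((g * X ^ (j : ℕ)) %ₘ q).coeff (i : ℕ)

lemma mulMat_map {S' : Type*} [CommRing S'] (φ : S →+* S') (n : ℕ) {q : S[X]}
    (hq : q.Monic) (g : S[X]) :
    (mulMat n q g).map φ = mulMat n (q.map φ) (g.map φ) := by
  ext i j
  simp only [mulMat, Matrix.map_apply, Matrix.of_apply, ← Polynomial.coeff_map,
    Polynomial.map_modByMonic _ hq, Polynomial.map_mul, Polynomial.map_pow, Polynomial.map_X]

lemma mulMat_eq_leftMulMatrix {q : S[X]} (hq : q.Monic) (g : S[X]) :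
    mulMat q.natDegree q g
      = Algebra.leftMulMatrix (AdjoinRoot.powerBasis' hq).basis (AdjoinRoot.mk q g) := by
  ext i j
  erw [Algebra.leftMulMatrix_eq_repr_mul]
  have hb : (AdjoinRoot.powerBasis' hq).basis j = AdjoinRoot.root q ^ (j : ℕ) := by
    simpa using (AdjoinRoot.powerBasis' hq).basis_eq_pow j
  rw [hb, ← AdjoinRoot.mk_X (f := q), ← map_pow, ← map_mul]
  have h2 : ((AdjoinRoot.powerBasis' hq).basis.repr ((AdjoinRoot.mk q) (g * X ^ (j : ℕ)))) i
      = (AdjoinRoot.modByMonicHom hq ((AdjoinRoot.mk q) (g * X ^ (j : ℕ)))).coeff (i : ℕ) := rfl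
  rw [h2, AdjoinRoot.modByMonicHom_mk]
  rfl

lemma mulMat_det_mul (n : ℕ) {q : S[X]} (hq : q.Monic) (hn : q.natDegree = n) (g h : S[X]) :
    (mulMat n q (g * h)).det = (mulMat n q g).det * (mulMat n q h).det := by
  subst hn
  rw [mulMat_eq_leftMulMatrix hq, mulMat_eq_leftMulMatrix hq, mulMat_eq_leftMulMatrix hq,
    map_mul, map_mul]
  exact Matrix.det_mul _ _

lemma mulMat_det_C (n : ℕ) {q : S[X]} (hq : q.Monic) (hn : q.natDegree = n) (c : S) :
    (mulMat n q (C c)).det = c ^ n := by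
  subst hn
  rw [mulMat_eq_leftMulMatrix hq, AdjoinRoot.mk_C]
  have : (AdjoinRoot.of q) c = algebraMap S (AdjoinRoot q) c := rfl
  rw [this, AlgHom.commutes, Matrix.algebraMap_eq_diagonal]
  erw [Matrix.det_diagonal]
  exact (Finset.prod_const c).trans (by simp)

lemma mulMat_det_one (n : ℕ) {q : S[X]} (hq : q.Monic) (hn : q.natDegree = n) :
    (mulMat n q 1).det = 1 := by
  have := mulMat_det_C n hq hn 1
  rw [map_one] at this
  simpa using this

lemma mulMat_det_multiset_prod (n : ℕ) {q : S[X]} (hq : q.Monic) (hn : q.natDegree = n)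
    (M : Multiset S[X]) :
    (mulMat n q M.prod).det = (M.map (fun p => (mulMat n q p).det)).prod := by
  induction M using Multiset.induction_on with
  | empty => simpa using mulMat_det_one n hq hn
  | cons p M ih =>
      rw [Multiset.prod_cons, mulMat_det_mul n hq hn, ih, Multiset.map_cons, Multiset.prod_cons]



section FieldSide
variable {K : Type*} [Field K]

lemma charpoly_eval {m : Type*} [Fintype m] [DecidableEq m] (A : Matrix m m K) (β : K) :
    A.charpoly.eval β = (Matrix.diagonal (fun _ => β) - A).det := by
  rw [Matrix.charpoly, ← Polynomial.coe_evalRingHom, RingHom.map_det]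
  congr 1
  ext i j
  simp [Matrix.charmatrix_apply, Matrix.diagonal_apply]
  by_cases h : i = j <;> simp [h]

lemma mulMat_det_X_sub_C (n : ℕ) {q : K[X]} (hq : q.Monic) (hn : q.natDegree = n) (β : K) :
    (mulMat n q (X - C β)).det = (-1) ^ n * q.eval β := by
  subst hn
  rw [mulMat_eq_leftMulMatrix hq, map_sub, AdjoinRoot.mk_X, AdjoinRoot.mk_C, map_sub]
  have hgen : AdjoinRoot.root q = (AdjoinRoot.powerBasis' hq).gen := rfl
  have hofβ : (AdjoinRoot.of q) β = algebraMap K (AdjoinRoot q) β := rfl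
  rw [hofβ, AlgHom.commutes, Matrix.algebraMap_eq_diagonal]
  set A := Algebra.leftMulMatrix (AdjoinRoot.powerBasis' hq).basis (AdjoinRoot.root q) with hA
  have hchar : A.charpoly = q := by
    rw [hA, hgen, charpoly_leftMulMatrix]
    rw [← hgen, AdjoinRoot.minpoly_root hq.ne_zero, hq.leadingCoeff, inv_one, map_one, mul_one]
  have h1 : q.eval β = (Matrix.diagonal (fun _ => β) - A).det := by
    conv_lhs => rw [← hchar]
    exact charpoly_eval A β
  have h3 : Matrix.diagonal ((algebraMap K (Fin (AdjoinRoot.powerBasis' hq).dim → K)) β)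
      = Matrix.diagonal (fun _ => β) := rfl
  have h2 : A - Matrix.diagonal (fun _ => β) = -(Matrix.diagonal (fun _ => β) - A) :=
    (neg_sub _ _).symm
  rw [h3, h2]
  erw [Matrix.det_neg, ← h1]
  have hdim : (AdjoinRoot.powerBasis' hq).dim = q.natDegree := AdjoinRoot.powerBasis'_dim hq
  simp [Fintype.card_fin, hdim]

end FieldSide

section ComplexSide

lemma multiset_double_prod_swap {α β γ : Type*} [CommMonoid γ] (s : Multiset α) (t : Multiset β)
    (f : α → β → γ) :
    (s.map (fun a => (t.map (f a)).prod)).prod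
      = (t.map (fun b => (s.map (fun a => f a b)).prod)).prod := by
  induction s using Multiset.induction_on with
  | empty => simp
  | cons a s ih =>
      simp only [Multiset.map_cons, Multiset.prod_cons, ih, ← Multiset.prod_map_mul]

lemma mulMat_det_derivative (n : ℕ) (hn : 2 ≤ n) {f : ℂ[X]} (hf : f.Monic)
    (hfd : f.natDegree = n) :
    (mulMat n f (derivative f)).det = (f.roots.map (fun r => eval r (derivative f))).prod := by
  have hf0 : f ≠ 0 := hf.ne_zero
  have hn0 : (n : ℂ) ≠ 0 := by exact_mod_cast (by omega : n ≠ 0)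
  have hc : (derivative f).coeff (n - 1) = (n : ℂ) := by
    rw [coeff_derivative]
    have h1 : n - 1 + 1 = n := by omega
    rw [h1]
    have h2 : f.coeff n = 1 := by rw [← hfd]; exact hf.coeff_natDegree
    rw [h2, one_mul]
    have : ((n - 1 : ℕ) : ℂ) = (n : ℂ) - 1 := by
      push_cast [Nat.cast_sub (by omega : 1 ≤ n)]; ring
    rw [this]; ring
  have hdn : (derivative f).natDegree = n - 1 := by
    refine le_antisymm (by simpa [hfd] using natDegree_derivative_le f) ?_
    exact le_natDegree_of_ne_zero (by rw [hc]; exact hn0)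
  have hlc : (derivative f).leadingCoeff = (n : ℂ) := by
    rw [Polynomial.leadingCoeff, hdn, hc]
  have hsplit' : Splits (derivative f) := IsAlgClosed.splits _
  have hcard' : Multiset.card (derivative f).roots = n - 1 := by
    rw [splits_iff_card_roots.mp hsplit', hdn]
  have hfact : derivative f = C (n : ℂ) * ((derivative f).roots.map (fun a => X - C a)).prod := by
    conv_lhs => rw [hsplit'.eq_prod_roots]
    rw [hlc]
  have hcardf : Multiset.card f.roots = n := by
    rw [splits_iff_card_roots.mp (IsAlgClosed.splits f), hfd]
  have hffact : f = (f.roots.map (fun a => X - C a)).prod :=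
    (IsAlgClosed.splits f).eq_prod_roots_of_monic hf
  have hevalf : ∀ β : ℂ, f.eval β = (f.roots.map (fun r => β - r)).prod := by
    intro β
    conv_lhs => rw [hffact]
    rw [eval_multiset_prod, Multiset.map_map]
    simp
  -- LHS
  have hLHS : (mulMat n f (derivative f)).det
      = (n : ℂ) ^ n * ((derivative f).roots.map (fun β => (-1 : ℂ) ^ n * f.eval β)).prod := by
    conv_lhs => rw [hfact]
    rw [mulMat_det_mul n hf hfd, mulMat_det_C n hf hfd,
      mulMat_det_multiset_prod n hf hfd, Multiset.map_map]
    congr 1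
    exact congrArg _ (Multiset.map_congr rfl (fun β _ => mulMat_det_X_sub_C n hf hfd β))
  -- RHS
  have hprodr : ∀ β : ℂ, (f.roots.map (fun r => r - β)).prod = (-1 : ℂ) ^ n * f.eval β := by
    intro β
    have : (f.roots.map (fun r => r - β)) = (f.roots.map (fun r => (-1 : ℂ) * (β - r))) := by
      apply Multiset.map_congr rfl
      intro r _; ring
    rw [this, Multiset.prod_map_mul, Multiset.map_const', Multiset.prod_replicate, hcardf,
      ← hevalf]
  have hRHS : (f.roots.map (fun r => eval r (derivative f))).prod
      = (n : ℂ) ^ n * ((derivative f).roots.map (fun β => (-1 : ℂ) ^ n * f.eval β)).prod := by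
    have heval' : ∀ r : ℂ, eval r (derivative f)
        = (n : ℂ) * ((derivative f).roots.map (fun β => r - β)).prod := by
      intro r
      conv_lhs => rw [hfact]
      rw [eval_mul, eval_C, eval_multiset_prod, Multiset.map_map]
      simp
    calc (f.roots.map (fun r => eval r (derivative f))).prod
        = (f.roots.map (fun r => (n : ℂ) * ((derivative f).roots.map (fun β => r - β)).prod)).prod := by
          apply congrArg; exact Multiset.map_congr rfl (fun r _ => heval' r)
      _ = (n : ℂ) ^ n * (f.roots.map (fun r => ((derivative f).roots.map (fun β => r - β)).prod)).prod := by
          rw [Multiset.prod_map_mul, Multiset.map_const', Multiset.prod_replicate, hcardf]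
      _ = (n : ℂ) ^ n * ((derivative f).roots.map (fun β => (f.roots.map (fun r => r - β)).prod)).prod := by
          rw [multiset_double_prod_swap]
      _ = (n : ℂ) ^ n * ((derivative f).roots.map (fun β => (-1 : ℂ) ^ n * f.eval β)).prod := by
          congr 1
          exact congrArg _ (Multiset.map_congr rfl (fun β _ => hprodr β))
  rw [hLHS, hRHS]

end ComplexSide
abbrev Rr := MvPolynomial (Fin 2) ℤ

def wt (n : ℕ) (d : Fin 2 →₀ ℕ) : ℕ := (n - 1) * d 0 + n * d 1

lemma wt_add (n : ℕ) (d1 d2 : Fin 2 →₀ ℕ) : wt n (d1 + d2) = wt n d1 + wt n d2 := by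
  simp only [wt, Finsupp.add_apply]; ring

/-- Weighted-degree bound predicate: every monomial `d·X^e` appearing in `p` satisfies
`(n-1) d₀ + n d₁ + e ≤ m`. -/
def W (n m : ℕ) (p : Rr[X]) : Prop :=
  ∀ e (d : Fin 2 →₀ ℕ), MvPolynomial.coeff d (p.coeff e) ≠ 0 → wt n d + e ≤ m

namespace W

lemma zero {n m : ℕ} : W n m (0 : Rr[X]) := by intro e d h; simp at h

lemma mono {n m m' : ℕ} {p : Rr[X]} (h : W n m p) (hm : m ≤ m') : W n m' p :=
  fun e d hd => (h e d hd).trans hm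

lemma add {n m : ℕ} {p q : Rr[X]} (hp : W n m p) (hq : W n m q) : W n m (p + q) := by
  intro e d hd
  rw [Polynomial.coeff_add, MvPolynomial.coeff_add] at hd
  rcases (by by_contra hc; push_neg at hc; simp [hc.1, hc.2] at hd :
      MvPolynomial.coeff d (p.coeff e) ≠ 0 ∨ MvPolynomial.coeff d (q.coeff e) ≠ 0) with h | h
  · exact hp e d h
  · exact hq e d h

lemma neg {n m : ℕ} {p : Rr[X]} (hp : W n m p) : W n m (-p) := by
  intro e d hd
  apply hp e d
  simpa using hd

lemma sub {n m : ℕ} {p q : Rr[X]} (hp : W n m p) (hq : W n m q) : W n m (p - q) := by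
  rw [sub_eq_add_neg]; exact hp.add hq.neg

lemma sum {n m : ℕ} {ι : Type*} (s : Finset ι) (f : ι → Rr[X]) (h : ∀ i ∈ s, W n m (f i)) :
    W n m (∑ i ∈ s, f i) := by
  classical
  induction s using Finset.induction_on with
  | empty => simpa using zero
  | insert _ _ hnotmem ih =>
      rw [Finset.sum_insert hnotmem]
      exact (h _ (Finset.mem_insert_self _ _)).add
        (ih fun i hi => h i (Finset.mem_insert_of_mem hi))

lemma mul {n m1 m2 : ℕ} {p q : Rr[X]} (hp : W n m1 p) (hq : W n m2 q) : W n (m1 + m2) (p * q) := by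
  intro e d hd
  rw [Polynomial.coeff_mul] at hd
  rw [MvPolynomial.coeff_sum] at hd
  obtain ⟨x, hx, hne⟩ := Finset.exists_ne_zero_of_sum_ne_zero hd
  rw [MvPolynomial.coeff_mul] at hne
  obtain ⟨y, hy, hne2⟩ := Finset.exists_ne_zero_of_sum_ne_zero hne
  have h1 : MvPolynomial.coeff y.1 (p.coeff x.1) ≠ 0 := fun hc => by simp [hc] at hne2
  have h2 : MvPolynomial.coeff y.2 (q.coeff x.2) ≠ 0 := fun hc => by simp [hc] at hne2
  have hb1 := hp x.1 y.1 h1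
  have hb2 := hq x.2 y.2 h2
  have hxe : x.1 + x.2 = e := Finset.HasAntidiagonal.mem_antidiagonal.mp hx
  have hyd : y.1 + y.2 = d := Finset.HasAntidiagonal.mem_antidiagonal.mp hy
  have : wt n d = wt n y.1 + wt n y.2 := by rw [← hyd, wt_add]
  omega

lemma CC {n m : ℕ} {c : Rr} (h : ∀ d, MvPolynomial.coeff d c ≠ 0 → wt n d ≤ m) :
    W n m (Polynomial.C c) := by
  intro e d hd
  rw [Polynomial.coeff_C] at hd
  by_cases he : e = 0
  · subst he; simpa using (h d (by simpa using hd))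
  · simp [he] at hd

lemma X_pow {n : ℕ} (k : ℕ) : W n k (X ^ k : Rr[X]) := by
  intro e d hd
  rw [Polynomial.coeff_X_pow] at hd
  by_cases he : e = k
  · subst he
    have : d = 0 := by
      by_contra hc
      simp [MvPolynomial.coeff_one, (Ne.symm hc)] at hd
    simp [this, wt]
  · simp [he] at hd

lemma deriv {n m : ℕ} {p : Rr[X]} (hp : W n m p) : W n (m - 1) (derivative p) := by
  intro e d hd
  rw [Polynomial.coeff_derivative] at hd
  have hcast : ((e : Rr) + 1) = MvPolynomial.C ((e : ℤ) + 1) := by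
    rw [map_add, map_one, map_natCast]
  rw [hcast, mul_comm, MvPolynomial.coeff_C_mul] at hd
  have h1 : MvPolynomial.coeff d (p.coeff (e + 1)) ≠ 0 := fun hc => by simp [hc] at hd
  have := hp (e + 1) d h1
  omega

end W

lemma modByMonic_step {q u H : Rr[X]} (hq : q.Monic) : (H - q * u) %ₘ q = H %ₘ q := by
  rw [sub_modByMonic, (modByMonic_eq_zero_iff_dvd hq).mpr (dvd_mul_right q u), sub_zero]

lemma step_degree_lt {q H : Rr[X]} (hq : q.Monic) (hH : H ≠ 0) (hge : q.degree ≤ H.degree) :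
    (H - q * (Polynomial.C H.leadingCoeff * X ^ (H.natDegree - q.natDegree))).degree
      < H.degree := by
  have hlc : H.leadingCoeff ≠ 0 := leadingCoeff_ne_zero.mpr hH
  have hdle : q.natDegree ≤ H.natDegree := natDegree_le_natDegree hge
  apply degree_sub_lt _ hH
  · rw [leadingCoeff_mul, leadingCoeff_mul, hq.leadingCoeff, leadingCoeff_C,
      leadingCoeff_X_pow, one_mul, mul_one]
  · rw [degree_mul, degree_mul, degree_C hlc, degree_X_pow, zero_add,
      degree_eq_natDegree hq.ne_zero, degree_eq_natDegree hH]
    rw [← Nat.cast_add]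
    congr 1
    omega

lemma W_modByMonic {n : ℕ} (hn : 2 ≤ n) {q : Rr[X]} (hq : q.Monic) (hqd : q.natDegree = n)
    (hWq : W n n q) {m : ℕ} : ∀ H, W n m H → W n m (H %ₘ q) := by
  suffices h : ∀ N H, H.natDegree ≤ N → W n m H → W n m (H %ₘ q) by
    exact fun H hH => h H.natDegree H le_rfl hH
  intro N
  induction N using Nat.strong_induction_on with
  | _ N ih =>
    intro H hHN hWH
    by_cases h0 : H = 0
    · subst h0; rw [zero_modByMonic]; exact W.zero
    by_cases hlt : H.degree < q.degree
    · rwa [(modByMonic_eq_self_iff hq).mpr hlt]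
    push_neg at hlt
    set d := H.natDegree with hd
    set u := Polynomial.C H.leadingCoeff * X ^ (d - n) with hu
    have hdn : n ≤ d := by
      have := natDegree_le_natDegree hlt; omega
    have hdm : d ≤ m := by
      obtain ⟨dd, hdd⟩ := MvPolynomial.ne_zero_iff.mp (leadingCoeff_ne_zero.mpr h0)
      have := hWH d dd hdd
      omega
    have hWu : W n ((m - d) + (d - n)) u := by
      apply W.mul _ (W.X_pow (d - n))
      apply W.CC
      intro dd hdd
      have := hWH d dd hdd
      omega
    have hW2 : W n m (H - q * u) := hWH.sub ((hWq.mul hWu).mono (by omega))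
    have hdeg : (H - q * u).degree < H.degree := by
      have h := step_degree_lt hq h0 hlt
      rw [hqd] at h
      exact h
    rw [← modByMonic_step (u := u) hq]
    by_cases h0' : H - q * u = 0
    · rw [h0', zero_modByMonic]; exact W.zero
    have hlt' : (H - q * u).natDegree < d := natDegree_lt_natDegree h0' hdeg
    have hdpos : 1 ≤ d := by omega
    exact ih (H - q * u).natDegree (by omega) _ le_rfl hW2

lemma W_modByMonic_pair {n : ℕ} (hn : 2 ≤ n) {q q₀ : Rr[X]} (hq : q.Monic) (hq₀ : q₀.Monic)
    (hqd : q.natDegree = n) (hq₀d : q₀.natDegree = n) (hWq : W n n q) (hWq₀ : W n n q₀)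
    (hWg : W n (n - 1) (q - q₀)) {m : ℕ} :
    ∀ H, W n m H → ∃ E, H %ₘ q = H %ₘ q₀ + E ∧ W n (m - 1) E := by
  have hdq : q.degree = (n : ℕ) := by rw [degree_eq_natDegree hq.ne_zero, hqd]
  have hdq₀ : q₀.degree = (n : ℕ) := by rw [degree_eq_natDegree hq₀.ne_zero, hq₀d]
  suffices h : ∀ N H, H.natDegree ≤ N → W n m H →
      ∃ E, H %ₘ q = H %ₘ q₀ + E ∧ W n (m - 1) E by
    exact fun H hH => h H.natDegree H le_rfl hH
  intro N
  induction N using Nat.strong_induction_on with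
  | _ N ih =>
    intro H hHN hWH
    by_cases h0 : H = 0
    · exact ⟨0, by simp [h0], W.zero⟩
    by_cases hlt : H.degree < q.degree
    · refine ⟨0, ?_, W.zero⟩
      rw [(modByMonic_eq_self_iff hq).mpr hlt,
        (modByMonic_eq_self_iff hq₀).mpr (by rw [hdq₀, ← hdq]; exact hlt), add_zero]
    push_neg at hlt
    set d := H.natDegree with hd
    set u := Polynomial.C H.leadingCoeff * X ^ (d - n) with hu
    have hdn : n ≤ d := by
      have h1 : q.natDegree ≤ H.natDegree := natDegree_le_natDegree hlt
      omega
    have hdm : d ≤ m := by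
      obtain ⟨dd, hdd⟩ := MvPolynomial.ne_zero_iff.mp (leadingCoeff_ne_zero.mpr h0)
      have := hWH d dd hdd
      omega
    have hWu : W n ((m - d) + (d - n)) u := by
      apply W.mul _ (W.X_pow (d - n))
      apply W.CC
      intro dd hdd
      have := hWH d dd hdd
      omega
    -- diff term
    have hWdiff : W n (m - 1) ((q - q₀) * u) := (hWg.mul hWu).mono (by omega)
    have hWdiffmod : W n (m - 1) (((q - q₀) * u) %ₘ q) :=
      W_modByMonic hn hq hqd hWq _ hWdiff
    -- recursive part
    set H' := H - q₀ * u with hH'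
    have hWH' : W n m H' := hWH.sub ((hWq₀.mul hWu).mono (by omega))
    have hdeg : H'.degree < H.degree := by
      have h := step_degree_lt hq₀ h0 (by rw [hdq₀, ← hdq]; exact hlt)
      rw [hq₀d] at h
      exact h
    have hsplit : H - q * u = H' - (q - q₀) * u := by rw [hH']; ring
    have e1 : H %ₘ q = H' %ₘ q - ((q - q₀) * u) %ₘ q := by
      rw [← modByMonic_step (u := u) hq, hsplit, sub_modByMonic]
    have e2 : H' %ₘ q₀ = H %ₘ q₀ := modByMonic_step hq₀
    have hrec : ∃ E, H' %ₘ q = H' %ₘ q₀ + E ∧ W n (m - 1) E := by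
      by_cases h0' : H' = 0
      · exact ⟨0, by simp [h0'], W.zero⟩
      have hlt' : H'.natDegree < d := natDegree_lt_natDegree h0' hdeg
      exact ih H'.natDegree (by omega) _ le_rfl hWH'
    obtain ⟨E', hE'1, hE'2⟩ := hrec
    refine ⟨E' - ((q - q₀) * u) %ₘ q, ?_, hE'2.sub hWdiffmod⟩
    rw [e1, hE'1, e2]
    ring


section Specific

def sR : Rr := MvPolynomial.X 0
def tR : Rr := MvPolynomial.X 1

def F0 (n : ℕ) : Rr[X] := X ^ n + (Polynomial.C sR * X + Polynomial.C tR)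

def Gp (n : ℕ) (a : ℕ → ℤ) : Rr[X] :=
  ∑ i ∈ Finset.Icc 1 (n - 2), Polynomial.C (MvPolynomial.C (a i)) * X ^ (n - i)

def Fp (n : ℕ) (a : ℕ → ℤ) : Rr[X] := F0 n + Gp n a

variable {n : ℕ}

lemma tail0_degree (hn : 2 ≤ n) : (Polynomial.C sR * X + Polynomial.C tR : Rr[X]).degree
    < ((n : ℕ) : WithBot ℕ) := by
  apply lt_of_le_of_lt (degree_add_le _ _)
  apply max_lt
  · exact lt_of_le_of_lt (degree_C_mul_X_le _) (by exact_mod_cast (by omega : 1 < n))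
  · exact lt_of_le_of_lt degree_C_le (by exact_mod_cast (by omega : 0 < n))

lemma Gp_degree (a : ℕ → ℤ) : (Gp n a).degree < ((n : ℕ) : WithBot ℕ) := by
  apply lt_of_le_of_lt (degree_sum_le _ _)
  rw [Finset.sup_lt_iff (by exact_mod_cast WithBot.bot_lt_coe n)]
  intro i hi
  obtain ⟨h1, h2⟩ := Finset.mem_Icc.mp hi
  exact lt_of_le_of_lt (degree_C_mul_X_pow_le _ _) (by exact_mod_cast (by omega : n - i < n))

lemma F0_monic (hn : 2 ≤ n) : (F0 n).Monic := monic_X_pow_add (tail0_degree hn)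

lemma F0_natDegree (hn : 2 ≤ n) : (F0 n).natDegree = n := by
  have h : (F0 n).degree = n := by
    rw [F0, degree_add_eq_left_of_degree_lt (by rw [degree_X_pow]; exact tail0_degree hn),
      degree_X_pow]
  exact natDegree_eq_of_degree_eq_some h

lemma Fp_eq (a : ℕ → ℤ) : Fp n a = X ^ n + (Polynomial.C sR * X + Polynomial.C tR + Gp n a) := by
  rw [Fp, F0]; ring

lemma Fp_tail_degree (hn : 2 ≤ n) (a : ℕ → ℤ) : (Polynomial.C sR * X + Polynomial.C tR + Gp n a).degree
    < ((n : ℕ) : WithBot ℕ) := lt_of_le_of_lt (degree_add_le _ _)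
      (max_lt (tail0_degree hn) (Gp_degree a))

lemma Fp_monic (hn : 2 ≤ n) (a : ℕ → ℤ) : (Fp n a).Monic := by
  rw [Fp_eq]; exact monic_X_pow_add (Fp_tail_degree hn a)

lemma Fp_natDegree (hn : 2 ≤ n) (a : ℕ → ℤ) : (Fp n a).natDegree = n := by
  have h : (Fp n a).degree = n := by
    rw [Fp_eq, degree_add_eq_left_of_degree_lt (by rw [degree_X_pow]; exact Fp_tail_degree hn a),
      degree_X_pow]
  exact natDegree_eq_of_degree_eq_some h

-- weights of basic constants
lemma wt_single0 (k : ℕ) : wt n (Finsupp.single 0 k) = (n - 1) * k := by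
  simp [wt, Finsupp.single_apply]

lemma wt_single1 (k : ℕ) : wt n (Finsupp.single 1 k) = n * k := by
  simp [wt, Finsupp.single_apply]

lemma W_CsR : W n (n - 1) (Polynomial.C sR : Rr[X]) := by
  apply W.CC
  intro d hd
  rw [sR, MvPolynomial.coeff_X'] at hd
  have : Finsupp.single (0 : Fin 2) 1 = d := by by_contra hc; simp [hc] at hd
  rw [← this, wt_single0]; omega

lemma W_CtR : W n n (Polynomial.C tR : Rr[X]) := by
  apply W.CC
  intro d hd
  rw [tR, MvPolynomial.coeff_X'] at hd
  have : Finsupp.single (1 : Fin 2) 1 = d := by by_contra hc; simp [hc] at hd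
  rw [← this, wt_single1]; omega

lemma W_Cconst (z : ℤ) (m : ℕ) : W n m (Polynomial.C (MvPolynomial.C z) : Rr[X]) := by
  apply W.CC
  intro d hd
  rw [MvPolynomial.coeff_C] at hd
  have : (0 : Fin 2 →₀ ℕ) = d := by by_contra hc; simp [hc] at hd
  rw [← this]
  simp [wt]

lemma W_F0 (hn : 2 ≤ n) : W n n (F0 n) := by
  rw [F0]
  refine (W.X_pow n).add (W.add ?_ ?_)
  · have h := (W_CsR (n := n)).mul (W.X_pow 1)
    rw [pow_one] at h
    exact h.mono (show n - 1 + 1 ≤ n by omega)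
  · exact (W_CtR (n := n)).mono le_rfl

lemma W_Gp (a : ℕ → ℤ) : W n (n - 1) (Gp n a) := by
  apply W.sum
  intro i hi
  obtain ⟨h1, h2⟩ := Finset.mem_Icc.mp hi
  exact ((W_Cconst (n := n) (a i) 0).mul (W.X_pow (n - i))).mono (show 0 + (n - i) ≤ n - 1 by omega)

lemma W_Fp (hn : 2 ≤ n) (a : ℕ → ℤ) : W n n (Fp n a) := (W_F0 hn).add ((W_Gp a).mono (by omega))

lemma W_Fp_sub_F0 (a : ℕ → ℤ) : W n (n - 1) (Fp n a - F0 n) := by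
  have : Fp n a - F0 n = Gp n a := by rw [Fp]; ring
  rw [this]; exact W_Gp a

-- derivative of F0
lemma F0_deriv : derivative (F0 n) = Polynomial.C (MvPolynomial.C (n : ℤ)) * X ^ (n - 1)
    + Polynomial.C sR := by
  have hC : (Polynomial.C (MvPolynomial.C (n : ℤ)) : Rr[X]) = ((n : ℕ) : Rr[X]) := by
    push_cast
    rfl
  rw [F0, hC]
  simp [derivative_X_pow]

lemma F0_deriv_degree (hn : 2 ≤ n) : (derivative (F0 n)).degree < ((n : ℕ) : WithBot ℕ) := by
  rw [F0_deriv]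
  apply lt_of_le_of_lt (degree_add_le _ _)
  apply max_lt
  · exact lt_of_le_of_lt (degree_C_mul_X_pow_le _ _) (by exact_mod_cast (by omega : n - 1 < n))
  · exact lt_of_le_of_lt degree_C_le (by exact_mod_cast (by omega : 0 < n))

lemma col_zero (hn : 2 ≤ n) : (derivative (F0 n) * X ^ (0 : ℕ)) %ₘ (F0 n) = derivative (F0 n) := by
  rw [pow_zero, mul_one]
  rw [(modByMonic_eq_self_iff (F0_monic hn)).mpr]
  rw [degree_eq_natDegree (F0_monic hn).ne_zero, F0_natDegree hn]
  exact F0_deriv_degree hn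

lemma col_pos (hn : 2 ≤ n) {j : ℕ} (hj1 : 1 ≤ j) (hjn : j < n) :
    (derivative (F0 n) * X ^ j) %ₘ (F0 n)
      = Polynomial.C (MvPolynomial.C ((1 : ℤ) - n) * sR) * X ^ j
        + Polynomial.C (MvPolynomial.C (-(n : ℤ)) * tR) * X ^ (j - 1) := by
  obtain ⟨m, rfl⟩ : ∃ m, n = m + 2 := ⟨n - 2, by omega⟩
  obtain ⟨k, rfl⟩ : ∃ k, j = k + 1 := ⟨j - 1, by omega⟩
  set cn : Rr := MvPolynomial.C ((m + 2 : ℕ) : ℤ) with hcn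
  have e1 : (MvPolynomial.C ((1 : ℤ) - (m + 2 : ℕ)) : Rr) = 1 - cn := by
    rw [hcn, ← map_one (MvPolynomial.C (σ := Fin 2) (R := ℤ)), ← map_sub]
  have e2 : (MvPolynomial.C (-((m + 2 : ℕ) : ℤ)) : Rr) = -cn := by rw [hcn, map_neg]
  have key : derivative (F0 (m + 2)) * X ^ (k + 1)
      = F0 (m + 2) * (Polynomial.C cn * X ^ k)
        + (Polynomial.C (MvPolynomial.C ((1 : ℤ) - (m + 2 : ℕ)) * sR) * X ^ (k + 1)
          + Polynomial.C (MvPolynomial.C (-((m + 2 : ℕ) : ℤ)) * tR) * X ^ (k + 1 - 1)) := by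
    rw [F0_deriv, F0, e1, e2]
    simp only [map_mul, map_sub, map_neg, map_one]
    have hsimp : m + 2 - 1 = m + 1 := by omega
    have hsimp2 : k + 1 - 1 = k := by omega
    rw [hsimp, hsimp2]
    ring
  rw [key, add_comm (F0 (m + 2) * (Polynomial.C cn * X ^ k)), add_modByMonic,
    (modByMonic_eq_zero_iff_dvd (F0_monic hn)).mpr (dvd_mul_right _ _), add_zero]
  rw [(modByMonic_eq_self_iff (F0_monic hn)).mpr]
  rw [degree_eq_natDegree (F0_monic hn).ne_zero, F0_natDegree hn]
  apply lt_of_le_of_lt (degree_add_le _ _)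
  apply max_lt
  · exact lt_of_le_of_lt (degree_C_mul_X_pow_le _ _) (by exact_mod_cast (by omega : k + 1 < m + 2))
  · exact lt_of_le_of_lt (degree_C_mul_X_pow_le _ _)
      (by exact_mod_cast (by omega : k + 1 - 1 < m + 2))

/-- lower-triangular main part -/
def Tm (n : ℕ) : Matrix (Fin n) (Fin n) Rr := Matrix.of fun i j =>
  if (j : ℕ) = 0 then
    (if (i : ℕ) = n - 1 then MvPolynomial.C (n : ℤ) else if (i : ℕ) = 0 then sR else 0)
  else if (i : ℕ) = (j : ℕ) then MvPolynomial.C ((1 : ℤ) - n) * sR else 0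

/-- nilpotent `t`-part -/
def Nm (n : ℕ) : Matrix (Fin n) (Fin n) Rr := Matrix.of fun i j =>
  if 1 ≤ (j : ℕ) ∧ (i : ℕ) = (j : ℕ) - 1 then MvPolynomial.C (-(n : ℤ)) * tR else 0

lemma M0_entry (hn : 2 ≤ n) (i j : Fin n) :
    mulMat n (F0 n) (derivative (F0 n)) i j = Tm n i j + Nm n i j := by
  rcases Nat.eq_zero_or_pos (j : ℕ) with hj | hj
  · have hXj : (X : Rr[X]) ^ (j : ℕ) = X ^ (0 : ℕ) := by rw [hj]
    simp only [mulMat, Tm, Nm, Matrix.of_apply]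
    rw [hXj, col_zero hn, F0_deriv,
      Polynomial.coeff_add, Polynomial.coeff_C_mul, Polynomial.coeff_X_pow, Polynomial.coeff_C]
    simp only [hj]
    split_ifs <;> first | (exfalso; omega) | simp
  · simp only [mulMat, Tm, Nm, Matrix.of_apply]
    rw [col_pos hn hj j.isLt,
      Polynomial.coeff_add, Polynomial.coeff_C_mul, Polynomial.coeff_X_pow,
      Polynomial.coeff_C_mul, Polynomial.coeff_X_pow]
    split_ifs <;> first | (exfalso; omega) | simp

end Specific
section Entries
variable {n : ℕ}

lemma M_entry_bound (hn : 2 ≤ n) (a : ℕ → ℤ) (i j : Fin n) (d : Fin 2 →₀ ℕ)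
    (hd : MvPolynomial.coeff d (mulMat n (Fp n a) (derivative (Fp n a)) i j) ≠ 0) :
    wt n d + (i : ℕ) ≤ n - 1 + (j : ℕ) := by
  have hW : W n (n - 1 + (j : ℕ)) ((derivative (Fp n a) * X ^ (j : ℕ)) %ₘ (Fp n a)) := by
    apply W_modByMonic hn (Fp_monic hn a) (Fp_natDegree hn a) (W_Fp hn a)
    exact ((W_Fp hn a).deriv.mul (W.X_pow (j : ℕ)))
  exact hW (i : ℕ) d hd

lemma T_entry_bound (hn : 2 ≤ n) (i j : Fin n) (d : Fin 2 →₀ ℕ)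
    (hd : MvPolynomial.coeff d (Tm n i j) ≠ 0) :
    wt n d + (i : ℕ) ≤ n - 1 + (j : ℕ) := by
  simp only [Tm, Matrix.of_apply] at hd
  split_ifs at hd with h1 h2 h3 h4
  · have : d = 0 := by
      by_contra hc
      rw [MvPolynomial.coeff_C] at hd
      simp [Ne.symm hc] at hd
    subst this
    simp only [wt, Finsupp.coe_zero, Pi.zero_apply, mul_zero, add_zero, zero_add]
    omega
  · rw [sR, MvPolynomial.coeff_X'] at hd
    have : Finsupp.single (0 : Fin 2) 1 = d := by by_contra hc; simp [hc] at hd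
    rw [← this, wt_single0]
    omega
  · simp at hd
  · rw [MvPolynomial.coeff_C_mul] at hd
    have hd2 : MvPolynomial.coeff d sR ≠ 0 := fun hc => by simp [hc] at hd
    rw [sR, MvPolynomial.coeff_X'] at hd2
    have : Finsupp.single (0 : Fin 2) 1 = d := by by_contra hc; simp [hc] at hd2
    rw [← this, wt_single0]
    omega
  · simp at hd

lemma N_entry_t (i j : Fin n) (d : Fin 2 →₀ ℕ)
    (hd : MvPolynomial.coeff d (Nm n i j) ≠ 0) : d 1 = 1 := by
  simp only [Nm, Matrix.of_apply] at hd
  split_ifs at hd with h1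
  · rw [MvPolynomial.coeff_C_mul] at hd
    have hd2 : MvPolynomial.coeff d tR ≠ 0 := fun hc => by simp [hc] at hd
    rw [tR, MvPolynomial.coeff_X'] at hd2
    have : Finsupp.single (1 : Fin 2) 1 = d := by by_contra hc; simp [hc] at hd2
    rw [← this]
    simp
  · simp at hd

lemma M_entry_split (hn : 2 ≤ n) (a : ℕ → ℤ) (i j : Fin n) :
    ∃ e : Rr, mulMat n (Fp n a) (derivative (Fp n a)) i j = Tm n i j + (Nm n i j + e)
      ∧ ∀ d : Fin 2 →₀ ℕ, MvPolynomial.coeff d e ≠ 0 →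
          wt n d + (i : ℕ) + 1 ≤ n - 1 + (j : ℕ) := by
  have hFd : derivative (Fp n a) = derivative (F0 n) + derivative (Gp n a) := by
    rw [Fp]; simp
  have hmul : derivative (Fp n a) * X ^ (j : ℕ)
      = derivative (F0 n) * X ^ (j : ℕ) + derivative (Gp n a) * X ^ (j : ℕ) := by
    rw [hFd]; ring
  have hWG' : W n (n - 2 + (j : ℕ)) (derivative (Gp n a) * X ^ (j : ℕ)) :=
    ((W_Gp a).deriv.mul (W.X_pow (j : ℕ))).mono (by omega)
  have hE1 : W n (n - 2 + (j : ℕ)) ((derivative (Gp n a) * X ^ (j : ℕ)) %ₘ (Fp n a)) :=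
    W_modByMonic hn (Fp_monic hn a) (Fp_natDegree hn a) (W_Fp hn a) _ hWG'
  obtain ⟨E2, hE2eq, hE2W⟩ := W_modByMonic_pair hn (Fp_monic hn a) (F0_monic hn)
      (Fp_natDegree hn a) (F0_natDegree hn) (W_Fp hn a) (W_F0 hn) (W_Fp_sub_F0 a)
      (derivative (F0 n) * X ^ (j : ℕ)) ((W_F0 hn).deriv.mul (W.X_pow (j : ℕ)))
  refine ⟨(E2 + (derivative (Gp n a) * X ^ (j : ℕ)) %ₘ (Fp n a)).coeff (i : ℕ), ?_, ?_⟩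
  · have h0 : ((derivative (F0 n) * X ^ (j : ℕ)) %ₘ (F0 n)).coeff (i : ℕ)
        = Tm n i j + Nm n i j := by
      rw [← M0_entry hn i j]; rfl
    show ((derivative (Fp n a) * X ^ (j : ℕ)) %ₘ (Fp n a)).coeff (i : ℕ) = _
    rw [hmul, add_modByMonic, hE2eq, Polynomial.coeff_add, Polynomial.coeff_add,
      Polynomial.coeff_add, h0]
    ring
  · intro d hd
    rw [Polynomial.coeff_add, MvPolynomial.coeff_add] at hd
    rcases (by by_contra hc; push_neg at hc; simp [hc.1, hc.2] at hd :
        MvPolynomial.coeff d (E2.coeff (i : ℕ)) ≠ 0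
          ∨ MvPolynomial.coeff d ((((derivative (Gp n a)) * X ^ (j : ℕ)) %ₘ (Fp n a)).coeff (i : ℕ)) ≠ 0)
      with h | h
    · have := hE2W (i : ℕ) d h
      omega
    · have := hE1 (i : ℕ) d h
      omega

end Entries

section CoeffExtract
variable {n : ℕ}

lemma coeff_prod_bound {ι : Type*} (n : ℕ) (s : Finset ι) (p : ι → Rr) (c b : ι → ℕ)
    (h : ∀ i ∈ s, ∀ d, MvPolynomial.coeff d (p i) ≠ 0 → wt n d + c i ≤ b i) :
    ∀ d, MvPolynomial.coeff d (∏ i ∈ s, p i) ≠ 0 →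
      wt n d + ∑ i ∈ s, c i ≤ ∑ i ∈ s, b i := by
  classical
  induction s using Finset.induction_on with
  | empty =>
      intro d hd
      rw [Finset.prod_empty] at hd
      have hd0 : d = 0 := by
        by_contra hc
        rw [MvPolynomial.coeff_one] at hd
        simp [Ne.symm hc] at hd
      simp [hd0, wt]
  | @insert a s hmem ih =>
      intro d hd
      rw [Finset.prod_insert hmem, MvPolynomial.coeff_mul] at hd
      obtain ⟨y, hy, hne⟩ := Finset.exists_ne_zero_of_sum_ne_zero hd
      have h1 : MvPolynomial.coeff y.1 (p a) ≠ 0 := fun hc => by simp [hc] at hne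
      have h2 : MvPolynomial.coeff y.2 (∏ i ∈ s, p i) ≠ 0 := fun hc => by simp [hc] at hne
      have hb1 := h _ (Finset.mem_insert_self _ _) y.1 h1
      have hb2 := ih (fun i hi => h i (Finset.mem_insert_of_mem hi)) y.2 h2
      have hyd : y.1 + y.2 = d := Finset.HasAntidiagonal.mem_antidiagonal.mp hy
      have hw : wt n d = wt n y.1 + wt n y.2 := by rw [← hyd, wt_add]
      rw [Finset.sum_insert hmem, Finset.sum_insert hmem]
      omega

lemma coeff_prod_bound_cond {ι : Type*} (n : ℕ) (s : Finset ι) (p : ι → Rr) (c b : ι → ℕ)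
    (h : ∀ i ∈ s, ∀ d, MvPolynomial.coeff d (p i) ≠ 0 → d 1 = 0 → wt n d + c i ≤ b i) :
    ∀ d, MvPolynomial.coeff d (∏ i ∈ s, p i) ≠ 0 → d 1 = 0 →
      wt n d + ∑ i ∈ s, c i ≤ ∑ i ∈ s, b i := by
  classical
  induction s using Finset.induction_on with
  | empty =>
      intro d hd _
      rw [Finset.prod_empty] at hd
      have hd0 : d = 0 := by
        by_contra hc
        rw [MvPolynomial.coeff_one] at hd
        simp [Ne.symm hc] at hd
      simp [hd0, wt]
  | @insert a s hmem ih =>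
      intro d hd hd1
      rw [Finset.prod_insert hmem, MvPolynomial.coeff_mul] at hd
      obtain ⟨y, hy, hne⟩ := Finset.exists_ne_zero_of_sum_ne_zero hd
      have h1 : MvPolynomial.coeff y.1 (p a) ≠ 0 := fun hc => by simp [hc] at hne
      have h2 : MvPolynomial.coeff y.2 (∏ i ∈ s, p i) ≠ 0 := fun hc => by simp [hc] at hne
      have hyd : y.1 + y.2 = d := Finset.HasAntidiagonal.mem_antidiagonal.mp hy
      have hy1 : y.1 1 = 0 ∧ y.2 1 = 0 := by
        have : y.1 1 + y.2 1 = d 1 := by rw [← hyd]; simp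
        omega
      have hb1 := h _ (Finset.mem_insert_self _ _) y.1 h1 hy1.1
      have hb2 := ih (fun i hi => h i (Finset.mem_insert_of_mem hi)) y.2 h2 hy1.2
      have hw : wt n d = wt n y.1 + wt n y.2 := by rw [← hyd, wt_add]
      rw [Finset.sum_insert hmem, Finset.sum_insert hmem]
      omega

lemma coeff_det_M_bound (hn : 2 ≤ n) (a : ℕ → ℤ) (d : Fin 2 →₀ ℕ)
    (hd : MvPolynomial.coeff d (mulMat n (Fp n a) (derivative (Fp n a))).det ≠ 0) :
    wt n d ≤ n * (n - 1) := by
  rw [Matrix.det_apply', MvPolynomial.coeff_sum] at hd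
  obtain ⟨σ, _, hne⟩ := Finset.exists_ne_zero_of_sum_ne_zero hd
  have hcast : ((↑(↑(Equiv.Perm.sign σ) : ℤ) : Rr)) = MvPolynomial.C ((Equiv.Perm.sign σ : ℤ)) :=
    (map_intCast (MvPolynomial.C : ℤ →+* Rr) _).symm
  rw [hcast, MvPolynomial.coeff_C_mul] at hne
  have hprod : MvPolynomial.coeff d (∏ i, mulMat n (Fp n a) (derivative (Fp n a)) (σ i) i) ≠ 0 :=
    fun hc => by simp [hc] at hne
  have hb := coeff_prod_bound n Finset.univ _ (fun i => ((σ i : Fin n) : ℕ))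
    (fun i => n - 1 + (i : ℕ)) (fun i _ dd hdd => M_entry_bound hn a (σ i) i dd hdd) d hprod
  have hb' : wt n d + ∑ i : Fin n, ((σ i : Fin n) : ℕ) ≤ ∑ i : Fin n, (n - 1 + (i : ℕ)) := hb
  have h1 : ∑ i : Fin n, ((σ i : Fin n) : ℕ) = ∑ i : Fin n, (i : ℕ) :=
    Equiv.sum_comp σ (fun i => (i : ℕ))
  have h2 : ∑ i : Fin n, (n - 1 + (i : ℕ)) = n * (n - 1) + ∑ i : Fin n, (i : ℕ) := by
    rw [Finset.sum_add_distrib, Finset.sum_const, Finset.card_univ, Fintype.card_fin,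
      smul_eq_mul, Nat.mul_comm]
  omega

end CoeffExtract

section KeyCoeff
variable {n : ℕ}

/-- the leading monomial `s^n` -/
def dlt (n : ℕ) : Fin 2 →₀ ℕ := Finsupp.single 0 n

lemma dlt_one : (dlt n) 1 = 0 := by
  simp [dlt, Finsupp.single_apply]

lemma wt_dlt : wt n (dlt n) = (n - 1) * n := by
  rw [dlt, wt_single0]

lemma coeff_dlt_det (hn : 2 ≤ n) (a : ℕ → ℤ) :
    MvPolynomial.coeff (dlt n) (mulMat n (Fp n a) (derivative (Fp n a))).det
      = MvPolynomial.coeff (dlt n) (Tm n).det := by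
  classical
  rw [Matrix.det_apply', Matrix.det_apply', MvPolynomial.coeff_sum, MvPolynomial.coeff_sum]
  apply Finset.sum_congr rfl
  intro σ _
  have hcast : ((↑(↑(Equiv.Perm.sign σ) : ℤ) : Rr)) = MvPolynomial.C ((Equiv.Perm.sign σ : ℤ)) :=
    (map_intCast (MvPolynomial.C : ℤ →+* Rr) _).symm
  rw [hcast, MvPolynomial.coeff_C_mul, MvPolynomial.coeff_C_mul]
  congr 1
  choose e he hWe using fun i : Fin n => M_entry_split hn a (σ i) i
  have hM : ∀ i : Fin n, mulMat n (Fp n a) (derivative (Fp n a)) (σ i) i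
      = (Nm n (σ i) i + e i) + Tm n (σ i) i := by
    intro i; rw [he i]; ring
  have hstep : (∏ i, mulMat n (Fp n a) (derivative (Fp n a)) (σ i) i)
      = ∏ i, ((Nm n (σ i) i + e i) + Tm n (σ i) i) :=
    Finset.prod_congr rfl (fun i _ => hM i)
  rw [hstep, Finset.prod_add, MvPolynomial.coeff_sum]
  have hvanish : ∀ t ∈ Finset.univ.powerset (α := Fin n), t ≠ ∅ →
      MvPolynomial.coeff (dlt n)
        ((∏ i ∈ t, (Nm n (σ i) i + e i)) * ∏ i ∈ Finset.univ \ t, Tm n (σ i) i) = 0 := by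
    intro t _ hne0
    have hpiece : (∏ i ∈ t, (Nm n (σ i) i + e i)) * ∏ i ∈ Finset.univ \ t, Tm n (σ i) i
        = ∏ i, (t.piecewise (fun i => Nm n (σ i) i + e i) (fun i => Tm n (σ i) i)) i := by
      rw [Finset.prod_piecewise, Finset.univ_inter]
    rw [hpiece]
    by_contra hc
    have hper : ∀ i ∈ Finset.univ (α := Fin n), ∀ d : Fin 2 →₀ ℕ,
        MvPolynomial.coeff d
          ((t.piecewise (fun i => Nm n (σ i) i + e i) (fun i => Tm n (σ i) i)) i) ≠ 0 →
        d 1 = 0 →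
        wt n d + (((σ i : Fin n) : ℕ) + (if i ∈ t then 1 else 0)) ≤ n - 1 + (i : ℕ) := by
      intro i _ d hd hd1
      by_cases hi : i ∈ t
      · rw [Finset.piecewise_eq_of_mem _ _ _ hi] at hd
        rw [MvPolynomial.coeff_add] at hd
        rcases (by by_contra hcc; push_neg at hcc; simp [hcc.1, hcc.2] at hd :
            MvPolynomial.coeff d (Nm n (σ i) i) ≠ 0 ∨ MvPolynomial.coeff d (e i) ≠ 0) with h | h
        · have := N_entry_t (σ i) i d h
          omega
        · have := hWe i d h
          simp only [if_pos hi]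
          omega
      · rw [Finset.piecewise_eq_of_notMem _ _ _ hi] at hd
        have := T_entry_bound hn (σ i) i d hd
        simp only [if_neg hi]
        omega
    have hbound := coeff_prod_bound_cond n Finset.univ _
      (fun i => ((σ i : Fin n) : ℕ) + (if i ∈ t then 1 else 0))
      (fun i => n - 1 + (i : ℕ)) hper (dlt n) hc dlt_one
    have hbound' : wt n (dlt n) + ∑ i : Fin n, (((σ i : Fin n) : ℕ) + (if i ∈ t then 1 else 0))
        ≤ ∑ i : Fin n, (n - 1 + (i : ℕ)) := hbound
    have h1 : ∑ i : Fin n, (((σ i : Fin n) : ℕ) + (if i ∈ t then 1 else 0))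
        = (∑ i : Fin n, (i : ℕ)) + t.card := by
      rw [Finset.sum_add_distrib]
      congr 1
      · exact Equiv.sum_comp σ (fun i => (i : ℕ))
      · rw [Finset.sum_ite_mem, Finset.univ_inter, Finset.sum_const, smul_eq_mul, mul_one]
    have h2 : ∑ i : Fin n, (n - 1 + (i : ℕ)) = n * (n - 1) + ∑ i : Fin n, (i : ℕ) := by
      rw [Finset.sum_add_distrib, Finset.sum_const, Finset.card_univ, Fintype.card_fin,
        smul_eq_mul, Nat.mul_comm]
    have h3 : wt n (dlt n) = (n - 1) * n := wt_dlt
    have h4 : t.card ≠ 0 := fun hcc => hne0 (Finset.card_eq_zero.mp hcc)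
    have h5 : (n - 1) * n = n * (n - 1) := Nat.mul_comm _ _
    omega
  rw [Finset.sum_eq_single_of_mem ∅ (Finset.empty_mem_powerset _)
    (fun t ht hne0 => hvanish t ht hne0)]
  simp

lemma Tm_triangular : (Tm n).BlockTriangular OrderDual.toDual := by
  intro i j hij
  have hij' : i < j := hij
  simp only [Tm, Matrix.of_apply]
  rw [if_neg (by omega : ¬ (j : ℕ) = 0), if_neg (by omega : ¬ (i : ℕ) = (j : ℕ))]

lemma coeff_dlt_det_Tm (hn : 2 ≤ n) :
    MvPolynomial.coeff (dlt n) (Tm n).det = ((1 : ℤ) - n) ^ (n - 1) := by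
  rw [Matrix.det_of_lowerTriangular _ Tm_triangular]
  obtain ⟨m, rfl⟩ : ∃ m, n = m + 2 := ⟨n - 2, by omega⟩
  have hdiag : (∏ i : Fin (m + 2), Tm (m + 2) i i)
      = sR * (MvPolynomial.C ((1 : ℤ) - (m + 2 : ℕ)) * sR) ^ (m + 1) := by
    rw [Fin.prod_univ_succ]
    have h00 : Tm (m + 2) 0 0 = sR := by
      simp only [Tm, Matrix.of_apply, Fin.val_zero]
      split_ifs <;> first | rfl | omega
    have hentry : ∀ i : Fin (m + 1), Tm (m + 2) i.succ i.succ
        = MvPolynomial.C ((1 : ℤ) - (m + 2 : ℕ)) * sR := by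
      intro i
      simp only [Tm, Matrix.of_apply, Fin.val_succ]
      rw [if_neg (by omega)]
      simp
    rw [h00, Finset.prod_congr rfl (fun i _ => hentry i), Finset.prod_const, Finset.card_univ,
      Fintype.card_fin]
  rw [hdiag]
  have hX : sR * (MvPolynomial.C ((1 : ℤ) - (m + 2 : ℕ)) * sR) ^ (m + 1)
      = MvPolynomial.C (((1 : ℤ) - (m + 2 : ℕ)) ^ (m + 1)) * (MvPolynomial.X 0) ^ (m + 2) := by
    rw [mul_pow, ← map_pow, sR]
    ring
  rw [hX, MvPolynomial.coeff_C_mul, MvPolynomial.coeff_X_pow]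
  simp [dlt]

end KeyCoeff

end DiscProofAux

open Polynomial

/-- The discriminant of a monic polynomial over `ℂ`, defined as
`∏_{i<j} (α_i - α_j)^2 = (-1)^{n(n-1)/2} ∏_i f'(α_i)`. -/
noncomputable def disc (f : Polynomial ℂ) : ℂ :=
  (-1 : ℂ) ^ (f.natDegree * (f.natDegree - 1) / 2) *
    (f.roots.map (fun r => Polynomial.eval r (Polynomial.derivative f))).prod

open DiscProofAux in
/-- For `n ≥ 2` and fixed integers `a 1, ..., a (n-2)`, the discriminant
`Δ(a_{n-1}, a_n)` of `X^n + a_1 X^{n-1} + ... + a_{n-1} X + a_n`, as a polynomial in the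
two variables `a_{n-1}` (variable `0`) and `a_n` (variable `1`), equals
`(-1)^{(n-1)(n-2)/2} (n-1)^{n-1} a_{n-1}^n` plus a polynomial of total degree `< n`. -/
theorem disc_shape_in_last_two_coeffs (n : ℕ) (hn : 2 ≤ n) (a : ℕ → ℤ) :
    ∃ P Φ : MvPolynomial (Fin 2) ℤ,
      (∀ s t : ℤ, ((MvPolynomial.eval ![s, t] P : ℤ) : ℂ) =
        disc (X ^ n + (∑ i ∈ Finset.Icc 1 (n - 2), C ((a i : ℂ)) * X ^ (n - i))
          + C ((s : ℤ) : ℂ) * X + C ((t : ℤ) : ℂ))) ∧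
      P = MvPolynomial.C ((-1 : ℤ) ^ ((n - 1) * (n - 2) / 2) * ((n - 1 : ℕ) : ℤ) ^ (n - 1)) *
            (MvPolynomial.X 0) ^ n + Φ ∧
      Φ.totalDegree < n := by
  classical
  set sgn : ℤ := (-1 : ℤ) ^ (n * (n - 1) / 2) with hsgn
  set c0 : ℤ := (-1 : ℤ) ^ ((n - 1) * (n - 2) / 2) * ((n - 1 : ℕ) : ℤ) ^ (n - 1) with hc0
  set M := mulMat n (Fp n a) (derivative (Fp n a)) with hM
  set P : MvPolynomial (Fin 2) ℤ := MvPolynomial.C sgn * M.det with hP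
  -- arithmetic facts
  have hexp : n * (n - 1) / 2 = (n - 1) * (n - 2) / 2 + (n - 1) := by
    obtain ⟨m, rfl⟩ : ∃ m, n = m + 2 := ⟨n - 2, by omega⟩
    show (m + 2) * (m + 1) / 2 = (m + 1) * m / 2 + (m + 1)
    obtain ⟨k, hk⟩ := Nat.even_mul_succ_self m
    have h2 : (m + 2) * (m + 1) = k + k + 2 * (m + 1) := by
      have : (m + 2) * (m + 1) = m * (m + 1) + 2 * (m + 1) := by ring
      omega
    have h3 : (m + 1) * m = k + k := by
      have : (m + 1) * m = m * (m + 1) := by ring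
      omega
    rw [h2, h3]
    omega
  have hcast : ((n - 1 : ℕ) : ℤ) = (n : ℤ) - 1 := by
    push_cast [Nat.cast_sub (by omega : 1 ≤ n)]
    ring
  have hPδ : MvPolynomial.coeff (dlt n) P = c0 := by
    rw [hP, MvPolynomial.coeff_C_mul, coeff_dlt_det hn a, coeff_dlt_det_Tm hn]
    have h1 : ((1 : ℤ) - n) ^ (n - 1) = (-1 : ℤ) ^ (n - 1) * ((n : ℤ) - 1) ^ (n - 1) := by
      rw [show (1 : ℤ) - n = (-1) * ((n : ℤ) - 1) by ring, mul_pow]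
    have heven : ((-1 : ℤ) ^ (n - 1)) * ((-1 : ℤ) ^ (n - 1)) = 1 := by
      rw [← pow_add]
      exact Even.neg_one_pow ⟨n - 1, rfl⟩
    calc sgn * ((1 : ℤ) - n) ^ (n - 1)
        = ((-1 : ℤ) ^ ((n - 1) * (n - 2) / 2) * (-1) ^ (n - 1))
            * ((-1 : ℤ) ^ (n - 1) * ((n : ℤ) - 1) ^ (n - 1)) := by
          rw [hsgn, hexp, pow_add, h1]
      _ = (-1 : ℤ) ^ ((n - 1) * (n - 2) / 2)
            * ((((-1 : ℤ) ^ (n - 1)) * ((-1 : ℤ) ^ (n - 1))) * ((n : ℤ) - 1) ^ (n - 1)) := by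
          ring
      _ = c0 := by rw [heven, one_mul, hc0, hcast]
  refine ⟨P, P - MvPolynomial.C c0 * (MvPolynomial.X 0) ^ n, ?_, by ring, ?_⟩
  · -- evaluation
    intro s t
    set ψ : MvPolynomial (Fin 2) ℤ →+* ℂ :=
      (Int.castRingHom ℂ).comp (MvPolynomial.eval ![s, t]) with hψ
    have hψs : ψ sR = ((s : ℤ) : ℂ) := by simp [hψ, sR]
    have hψt : ψ tR = ((t : ℤ) : ℂ) := by simp [hψ, tR]
    have hψC : ∀ z : ℤ, ψ (MvPolynomial.C z) = (z : ℂ) := fun z => by simp [hψ]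
    set f : ℂ[X] := (Fp n a).map ψ with hf
    have hfmonic : f.Monic := (Fp_monic hn a).map ψ
    have hfdeg : f.natDegree = n := by
      rw [hf, (Fp_monic hn a).natDegree_map, Fp_natDegree hn a]
    have hfeq : f = X ^ n + (∑ i ∈ Finset.Icc 1 (n - 2), C ((a i : ℂ)) * X ^ (n - i))
        + C ((s : ℤ) : ℂ) * X + C ((t : ℤ) : ℂ) := by
      rw [hf, Fp, F0, Gp]
      simp only [Polynomial.map_add, Polynomial.map_pow, Polynomial.map_X, Polynomial.map_mul,
        Polynomial.map_C, Polynomial.map_sum, hψs, hψt, hψC]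
      ring
    have hLHS : ((MvPolynomial.eval ![s, t] P : ℤ) : ℂ) = ψ P := rfl
    have h2 : ψ M.det = (mulMat n f (derivative f)).det := by
      rw [RingHom.map_det]
      congr 1
      rw [RingHom.mapMatrix_apply, hM, mulMat_map ψ n (Fp_monic hn a),
        Polynomial.derivative_map]
    rw [hLHS, hP, map_mul, h2, hψC sgn,
      mulMat_det_derivative n hn hfmonic hfdeg, ← hfeq]
    have hdisc : disc f = (-1 : ℂ) ^ (f.natDegree * (f.natDegree - 1) / 2) *
        (f.roots.map (fun r => Polynomial.eval r (Polynomial.derivative f))).prod := rfl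
    rw [hdisc, hfdeg, hsgn]
    push_cast
    ring
  · -- total degree of the remainder
    rw [MvPolynomial.totalDegree]
    rw [Finset.sup_lt_iff (show (⊥ : ℕ) < n by
      simpa using (by omega : 0 < n))]
    intro d hd
    rw [MvPolynomial.mem_support_iff] at hd
    by_cases hdd : d = dlt n
    · exfalso
      apply hd
      rw [hdd, MvPolynomial.coeff_sub, hPδ, MvPolynomial.coeff_C_mul,
        MvPolynomial.coeff_X_pow]
      simp [dlt]
    · have hcoeffP : MvPolynomial.coeff d P ≠ 0 := by
        intro hc
        apply hd
        rw [MvPolynomial.coeff_sub, hc, MvPolynomial.coeff_C_mul, MvPolynomial.coeff_X_pow,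
          if_neg (fun hcc => hdd (by rw [← hcc]; rfl))]
        simp
      have hdet : MvPolynomial.coeff d M.det ≠ 0 := by
        rw [hP, MvPolynomial.coeff_C_mul] at hcoeffP
        exact fun hc => hcoeffP (by rw [hc, mul_zero])
      have hwt := coeff_det_M_bound hn a d hdet
      have hsum : (d.sum fun _ e => e) = d 0 + d 1 := by
        rw [Finsupp.sum_fintype _ _ (fun i => rfl), Fin.sum_univ_two]
      rw [hsum]
      -- arithmetic: (n-1) d0 + n d1 ≤ n (n-1) and d ≠ (n,0) implies d0 + d1 < n
      set A := d 0 with hA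
      set B := d 1 with hB
      rw [wt] at hwt
      by_contra hge
      push_neg at hge
      have hsub : n - 1 + 1 = n := by omega
      have eB : (n - 1) * B + B = n * B := by
        have h6 : (n - 1) * B + 1 * B = ((n - 1) + 1) * B := (Nat.add_mul _ _ _).symm
        rw [one_mul] at h6
        rw [h6, hsub]
      have e1 : (n - 1) * (A + B) + B = (n - 1) * A + n * B := by
        rw [Nat.mul_add, add_assoc, eB]
      rw [Nat.mul_comm n (n - 1)] at hwt
      have p1 : (n - 1) * n ≤ (n - 1) * (A + B) := Nat.mul_le_mul_left _ hge
      have c1 : (n - 1) * (A + B) + B ≤ (n - 1) * (A + B) := by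
        calc (n - 1) * (A + B) + B = (n - 1) * A + n * B := e1
          _ ≤ (n - 1) * n := hwt
          _ ≤ (n - 1) * (A + B) := p1
      have hB0 : B = 0 := by
        generalize (n - 1) * (A + B) = y at c1
        omega
      have hA_le : A ≤ n := by
        have h5 : (n - 1) * A ≤ (n - 1) * n :=
          le_trans (Nat.le_add_right _ _) hwt
        exact Nat.le_of_mul_le_mul_left h5 (by omega)
      have hAn : A = n := by omega
      apply hdd
      ext i
      have hi : i = 0 ∨ i = 1 := by omega
      rcases hi with hi | hi <;> subst hi <;>
        simp [dlt, Finsupp.single_apply, ← hA, ← hB, hAn, hB0]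

end
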